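/- As formal power series in q, the identity ∑_{n≥r} q^{n^2+n} / ((q;q)_{n-r} (q;q)_{n+r+1}) = q^{r(r+1)} / (q;q)_∞ holds for every nonnegative integer r. -/

import Mathlib

open PowerSeries Finset

noncomputable def qPoch (n : ℕ) : PowerSeries ℚ :=
  ∏ k ∈ Finset.range n, (1 - (X : PowerSeries ℚ) ^ (k + 1))

noncomputable def gauss (L : ℕ) (s : ℤ) : PowerSeries ℚ :=
  if 0 ≤ s ∧ s ≤ (L : ℤ) then
    qPoch L * (qPoch s.toNat)⁻¹ * (qPoch (L - s.toNat))⁻¹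
  else 0

lemma qPoch_constantCoeff (n : ℕ) : constantCoeff (R := ℚ) (qPoch n) = 1 := by
  unfold qPoch
  rw [map_prod]
  apply Finset.prod_eq_one
  intro k _
  simp

lemma qPoch_mul_inv (n : ℕ) : qPoch n * (qPoch n)⁻¹ = 1 :=
  PowerSeries.mul_inv_cancel _ (by rw [qPoch_constantCoeff]; norm_num)

lemma qPoch_succ (n : ℕ) : qPoch (n + 1) = qPoch n * (1 - X ^ (n + 1)) := by
  unfold qPoch
  rw [Finset.prod_range_succ]

lemma qinv_step (n : ℕ) :
    (qPoch n)⁻¹ = (1 - X ^ (n + 1)) * (qPoch (n + 1))⁻¹ := by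
  calc (qPoch n)⁻¹ = (qPoch n)⁻¹ * (qPoch (n + 1) * (qPoch (n + 1))⁻¹) := by
        rw [qPoch_mul_inv, mul_one]
    _ = ((qPoch n)⁻¹ * qPoch n) * ((1 - X ^ (n + 1)) * (qPoch (n + 1))⁻¹) := by
        rw [qPoch_succ]; ring
    _ = (1 - X ^ (n + 1)) * (qPoch (n + 1))⁻¹ := by
        rw [mul_comm ((qPoch n)⁻¹) (qPoch n), qPoch_mul_inv, one_mul]

/-- Stability of coefficients of `(qPoch M)⁻¹` for `M ≥ N`. -/
lemma coeff_qinv_stable {N M : ℕ} (h : N ≤ M) :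
    coeff (R := ℚ) N (qPoch M)⁻¹ = coeff (R := ℚ) N (qPoch N)⁻¹ := by
  induction M, h using Nat.le_induction with
  | base => rfl
  | succ M hNM ih =>
    have hstep := qinv_step M
    have : (qPoch (M + 1))⁻¹ = (qPoch M)⁻¹ + X ^ (M + 1) * (qPoch (M + 1))⁻¹ := by
      rw [hstep]; ring
    rw [this, map_add, coeff_X_pow_mul', if_neg (by omega), add_zero, ih]

noncomputable def term (k m : ℕ) : PowerSeries ℚ :=
  X ^ (m * (m + k)) * (qPoch m)⁻¹ * (qPoch (m + k))⁻¹

noncomputable def P (k L : ℕ) : PowerSeries ℚ := ∑ m ∈ Finset.range L, term k m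

lemma term_zero_rec (k : ℕ) : term k 0 = (1 - X ^ (k + 1)) * term (k + 1) 0 := by
  unfold term
  simp only [Nat.zero_mul, zero_add, pow_zero, one_mul]
  rw [qinv_step k]
  ring

lemma term_rec (k m : ℕ) :
    term k (m + 1) = (1 - X ^ (k + 1)) * term (k + 1) (m + 1) + X ^ (k + 1) * term (k + 2) m := by
  unfold term
  have e1 : m + 1 + (k + 1) = m + 1 + k + 1 := by ring
  have e2 : m + (k + 2) = m + 1 + k + 1 := by ring
  rw [e1, e2, qinv_step (m + 1 + k), qinv_step m]
  ring

lemma P_rec (k L : ℕ) :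
    P k (L + 1) = (1 - X ^ (k + 1)) * P (k + 1) (L + 1) + X ^ (k + 1) * P (k + 2) L := by
  induction L with
  | zero =>
    simp only [P, zero_add, Finset.sum_range_one, Finset.range_zero, Finset.sum_empty,
      mul_zero, add_zero]
    exact term_zero_rec k
  | succ L ih =>
    have h1 : P k (L + 2) = P k (L + 1) + term k (L + 1) := Finset.sum_range_succ _ _
    have h2 : P (k + 1) (L + 2) = P (k + 1) (L + 1) + term (k + 1) (L + 1) :=
      Finset.sum_range_succ _ _
    have h3 : P (k + 2) (L + 1) = P (k + 2) L + term (k + 2) L := Finset.sum_range_succ _ _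
    rw [h1, h2, h3, ih, term_rec]
    ring

lemma coeff_term_zero {N k m : ℕ} (h : N < m * (m + k)) : coeff (R := ℚ) N (term k m) = 0 := by
  unfold term
  rw [mul_assoc, coeff_X_pow_mul', if_neg (by omega)]

lemma coeff_P_stable {N k L : ℕ} (h : N + 1 ≤ L) :
    coeff (R := ℚ) N (P k L) = coeff (R := ℚ) N (P k (N + 1)) := by
  unfold P
  rw [map_sum, map_sum]
  refine (Finset.sum_subset (Finset.range_subset_range.2 h) ?_).symm
  intro m _ hm
  rw [Finset.mem_range, not_lt] at hm
  apply coeff_term_zero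
  have hm1 : 1 ≤ m := by omega
  have : m * 1 ≤ m * (m + k) := Nat.mul_le_mul_left m (by omega)
  omega

noncomputable def tt (k N : ℕ) : ℚ := coeff (R := ℚ) N (P k (N + 1))

noncomputable def w (N : ℕ) : ℚ := coeff (R := ℚ) N (qPoch N)⁻¹

lemma tt_base {k N : ℕ} (h : N ≤ k) : tt k N = w N := by
  unfold tt P
  rw [map_sum]
  rw [Finset.sum_eq_single 0]
  · unfold term
    simp only [Nat.zero_mul, zero_add, pow_zero, one_mul]
    have : qPoch 0 = 1 := by unfold qPoch; simp
    rw [this, inv_one, one_mul, coeff_qinv_stable h]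
    rfl
  · intro m _ hm
    apply coeff_term_zero
    have hm1 : 1 ≤ m := Nat.one_le_iff_ne_zero.2 hm
    have : 1 * (1 + k) ≤ m * (m + k) := Nat.mul_le_mul hm1 (by omega)
    omega
  · intro h0
    exact absurd (Finset.mem_range.2 (by omega)) h0

lemma tt_rec (k N : ℕ) :
    tt k N = tt (k + 1) N
      - (if k + 1 ≤ N then tt (k + 1) (N - (k + 1)) - tt (k + 2) (N - (k + 1)) else 0) := by
  have h := P_rec k (N + 1)
  have hc := congrArg (coeff (R := ℚ) N) h
  have expand : coeff (R := ℚ) N (P k (N + 2)) =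
      coeff (R := ℚ) N (P (k + 1) (N + 2)) - coeff (R := ℚ) N (X ^ (k + 1) * P (k + 1) (N + 2))
        + coeff (R := ℚ) N (X ^ (k + 1) * P (k + 2) (N + 1)) := by
    rw [← map_sub, ← map_add]
    congr 1
    rw [h]; ring
  have hl : coeff (R := ℚ) N (P k (N + 2)) = tt k N := coeff_P_stable (by omega)
  have hr1 : coeff (R := ℚ) N (P (k + 1) (N + 2)) = tt (k + 1) N := coeff_P_stable (by omega)
  rw [hl, hr1] at expand
  rw [expand, coeff_X_pow_mul', coeff_X_pow_mul']
  by_cases hk : k + 1 ≤ N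
  · rw [if_pos hk, if_pos hk, if_pos hk]
    rw [show coeff (R := ℚ) (N - (k + 1)) (P (k + 1) (N + 2)) = tt (k + 1) (N - (k + 1)) from
        coeff_P_stable (by omega),
      show coeff (R := ℚ) (N - (k + 1)) (P (k + 2) (N + 1)) = tt (k + 2) (N - (k + 1)) from
        coeff_P_stable (by omega)]
    ring
  · rw [if_neg hk, if_neg hk, if_neg hk]
    ring

lemma tt_eq_w : ∀ N k : ℕ, tt k N = w N := by
  intro N
  induction N using Nat.strong_induction_on with
  | _ N IH =>
    have inner : ∀ f k : ℕ, N ≤ k + f → tt k N = w N := by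
      intro f
      induction f with
      | zero => intro k hk; exact tt_base (by omega)
      | succ f ihf =>
        intro k hk
        by_cases hkN : N ≤ k
        · exact tt_base hkN
        · have h1 : tt (k + 1) N = w N := ihf (k + 1) (by omega)
          rw [tt_rec, h1, if_pos (by omega)]
          rw [IH (N - (k + 1)) (by omega) (k + 1), IH (N - (k + 1)) (by omega) (k + 2)]
          ring
    intro k
    exact inner N k (by omega)

/-- `∑_{n ≥ r} q^{n²+n} / ((q;q)_{n-r} (q;q)_{n+r+1}) = q^{r(r+1)} / (q;q)_∞` as formal
power series: the coefficient of `q^N` on either side agrees for every `N` (terms with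
`n > N + r` and factors `(1 - q^k)` with `k > N` do not affect this coefficient). -/
theorem stmt3 (r : ℕ) : ∀ N : ℕ,
    PowerSeries.coeff (R := ℚ) N (∑ n ∈ Finset.Icc r (N + r),
        (X : PowerSeries ℚ) ^ (n ^ 2 + n) * (qPoch (n - r))⁻¹ * (qPoch (n + r + 1))⁻¹) =
      PowerSeries.coeff (R := ℚ) N ((X : PowerSeries ℚ) ^ (r * (r + 1)) * (qPoch N)⁻¹) := by
  intro N
  have hsum : (∑ n ∈ Finset.Icc r (N + r),
      (X : PowerSeries ℚ) ^ (n ^ 2 + n) * (qPoch (n - r))⁻¹ * (qPoch (n + r + 1))⁻¹)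
      = X ^ (r * (r + 1)) * P (2 * r + 1) (N + 1) := by
    unfold P
    rw [Finset.mul_sum]
    refine Finset.sum_bij' (fun n _ => n - r) (fun m _ => m + r) ?_ ?_ ?_ ?_ ?_
    · intro n hn
      rw [Finset.mem_Icc] at hn
      rw [Finset.mem_range]
      omega
    · intro m hm
      rw [Finset.mem_range] at hm
      rw [Finset.mem_Icc]
      omega
    · intro n hn
      rw [Finset.mem_Icc] at hn
      omega
    · intro m _
      omega
    · intro n hn
      rw [Finset.mem_Icc] at hn
      obtain ⟨h1, _⟩ := hn
      obtain ⟨m, rfl⟩ := Nat.exists_eq_add_of_le h1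
      unfold term
      rw [show r + m - r = m by omega, show m + (2 * r + 1) = r + m + r + 1 by omega,
        show (r + m) ^ 2 + (r + m) = r * (r + 1) + m * (r + m + r + 1) by ring,
        pow_add]
      ring
  rw [hsum, coeff_X_pow_mul', coeff_X_pow_mul']
  by_cases hr : r * (r + 1) ≤ N
  · rw [if_pos hr, if_pos hr]
    have h1 : coeff (R := ℚ) (N - r * (r + 1)) (P (2 * r + 1) (N + 1)) =
        tt (2 * r + 1) (N - r * (r + 1)) := coeff_P_stable (by omega)
    rw [h1, tt_eq_w]
    unfold w
    exact (coeff_qinv_stable (by omega)).symm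
  · rw [if_neg hr, if_neg hr]
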